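/- Let A and B be real-valued random variables on a probability space with A ∈ [l, L] and B ∈ [l, L] almost surely, where 0 < l ≤ L. Then |E[A/B] − E[A]/E[B]| ≤ (1/l²) · √(Var(A) · Var(B)) + (L/l³) · Var(B). -/

import Mathlib

open MeasureTheory ProbabilityTheory

/-- Covariance of two real random variables: `Cov(U, V) = E[UV] − E[U]·E[V]`. -/
noncomputable def covar {Ω : Type*} [MeasureSpace Ω] (U V : Ω → ℝ) : ℝ :=
  (∫ ω, U ω * V ω) - (∫ ω, U ω) * (∫ ω, V ω)

/-- Variance of a real random variable: `Var(U) = Cov(U, U)`. -/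
noncomputable def var {Ω : Type*} [MeasureSpace Ω] (U : Ω → ℝ) : ℝ := covar U U

private lemma int_of_bdd {Ω : Type*} [MeasureSpace Ω] [IsFiniteMeasure (ℙ : Measure Ω)]
    {f : Ω → ℝ} (hf : Measurable f) {C : ℝ} (h : ∀ᵐ ω ∂ℙ, |f ω| ≤ C) :
    Integrable f := by
  refine ⟨hf.aestronglyMeasurable, HasFiniteIntegral.of_bounded (C := C) ?_⟩
  simpa [Real.norm_eq_abs] using h

/-- If `A, B ∈ [l, L]` almost surely with `0 < l ≤ L`, then
`|E[A/B] − E[A]/E[B]| ≤ (1/l²)·√(Var(A)·Var(B)) + (L/l³)·Var(B)`. -/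
theorem ratio_expectation_gap
    {Ω : Type*} [MeasureSpace Ω] [IsProbabilityMeasure (ℙ : Measure Ω)]
    (l L : ℝ) (hl : 0 < l) (hlL : l ≤ L)
    (A B : Ω → ℝ) (hAmeas : Measurable A) (hBmeas : Measurable B)
    (hA : ∀ᵐ ω ∂ℙ, A ω ∈ Set.Icc l L)
    (hB : ∀ᵐ ω ∂ℙ, B ω ∈ Set.Icc l L) :
    |(∫ ω, A ω / B ω) - (∫ ω, A ω) / (∫ ω, B ω)|
      ≤ (1 / l ^ 2) * Real.sqrt (var A * var B) + (L / l ^ 3) * var B := by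
  have hL0 : (0:ℝ) < L := lt_of_lt_of_le hl hlL
  set a := ∫ ω, A ω with ha_def
  set b := ∫ ω, B ω with hb_def
  -- integrability of A and B
  have intA : Integrable A := int_of_bdd hAmeas (hA.mono fun ω h =>
    abs_le.mpr ⟨by linarith [h.1, h.2], h.2⟩)
  have intB : Integrable B := int_of_bdd hBmeas (hB.mono fun ω h =>
    abs_le.mpr ⟨by linarith [h.1, h.2], h.2⟩)
  -- bounds on a and b
  have hla : l ≤ a := by
    have := integral_mono_ae (integrable_const l) intA (hA.mono fun ω h => h.1)
    simpa using this
  have haL : a ≤ L := by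
    have := integral_mono_ae intA (integrable_const L) (hA.mono fun ω h => h.2)
    simpa using this
  have hlb : l ≤ b := by
    have := integral_mono_ae (integrable_const l) intB (hB.mono fun ω h => h.1)
    simpa using this
  have hbL : b ≤ L := by
    have := integral_mono_ae intB (integrable_const L) (hB.mono fun ω h => h.2)
    simpa using this
  have hb0 : (0:ℝ) < b := lt_of_lt_of_le hl hlb
  set c := a / b with hc_def
  have hc0 : 0 ≤ c := div_nonneg (le_of_lt (lt_of_lt_of_le hl hla)) hb0.le
  have hcL : c ≤ L / l := div_le_div₀ hL0.le haL hl hlb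
  have hcb : c * b = a := div_mul_cancel₀ a hb0.ne'
  -- the key auxiliary function
  set g : Ω → ℝ := fun ω => (A ω - c * B ω) * ((B ω)⁻¹ - b⁻¹) with hg_def
  have hgmeas : Measurable g :=
    (hAmeas.sub (measurable_const.mul hBmeas)).mul (hBmeas.inv.sub measurable_const)
  have hgbd : ∀ᵐ ω ∂ℙ, |g ω| ≤ (L + (L/l) * L) * (l⁻¹ + l⁻¹) := by
    filter_upwards [hA, hB] with ω hAω hBω
    have hBpos : 0 < B ω := lt_of_lt_of_le hl hBω.1
    have h1 : |A ω - c * B ω| ≤ L + (L/l) * L := by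
      refine (abs_sub _ _).trans ?_
      have : |c * B ω| ≤ (L/l) * L := by
        rw [abs_mul, abs_of_nonneg hc0, abs_of_nonneg hBpos.le]
        exact mul_le_mul hcL hBω.2 hBpos.le (by positivity)
      have hA' : |A ω| ≤ L := abs_le.mpr ⟨by linarith [hAω.1], hAω.2⟩
      linarith
    have h2 : |(B ω)⁻¹ - b⁻¹| ≤ l⁻¹ + l⁻¹ := by
      refine (abs_sub _ _).trans ?_
      have h3 : |(B ω)⁻¹| ≤ l⁻¹ := by
        rw [abs_of_nonneg (by positivity)]
        exact inv_anti₀ hl hBω.1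
      have h4 : |b⁻¹| ≤ l⁻¹ := by
        rw [abs_of_nonneg (by positivity)]
        exact inv_anti₀ hl hlb
      linarith
    calc |g ω| = |A ω - c * B ω| * |(B ω)⁻¹ - b⁻¹| := abs_mul _ _
      _ ≤ (L + (L/l) * L) * (l⁻¹ + l⁻¹) :=
        mul_le_mul h1 h2 (abs_nonneg _) (by positivity)
  have intg : Integrable g := int_of_bdd hgmeas hgbd
  have inth : Integrable (fun ω => (A ω - c * B ω) / b) := by
    exact ((intA.sub (intB.const_mul c)).div_const b)
  -- key identity : ∫ A/B - a/b = ∫ g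
  have key : (∫ ω, A ω / B ω) - a / b = ∫ ω, g ω := by
    have heq : ∀ᵐ ω ∂ℙ, A ω / B ω = g ω + ((A ω - c * B ω) / b + c) := by
      filter_upwards [hB] with ω hBω
      have hBpos : 0 < B ω := lt_of_lt_of_le hl hBω.1
      rw [hg_def]
      field_simp
      ring
    have hzero : ∫ ω, (A ω - c * B ω) / b = 0 := by
      rw [integral_div, integral_sub intA (intB.const_mul c), integral_const_mul,
        ← ha_def, ← hb_def, hcb, sub_self, zero_div]
    have h1 : ∫ ω, (g ω + ((A ω - c * B ω) / b + c))
        = (∫ ω, g ω) + ∫ ω, ((A ω - c * B ω) / b + c) :=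
      integral_add intg (inth.add (integrable_const c))
    have h2 : ∫ ω, ((A ω - c * B ω) / b + c)
        = (∫ ω, (A ω - c * B ω) / b) + ∫ (_ : Ω), (c:ℝ) :=
      integral_add inth (integrable_const c)
    rw [integral_congr_ae heq, h1, h2, hzero]
    simp [hc_def]
  -- pointwise bound of |g|
  set Bd : Ω → ℝ := fun ω => (1 / l ^ 2) * (|A ω - a| * |B ω - b|) + (L / l ^ 3) * (B ω - b) ^ 2
    with hBd_def
  have hgle : ∀ᵐ ω ∂ℙ, |g ω| ≤ Bd ω := by
    filter_upwards [hA, hB] with ω hAω hBω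
    have hBpos : 0 < B ω := lt_of_lt_of_le hl hBω.1
    have hprod : l ^ 2 ≤ B ω * b := by nlinarith [hBω.1, hlb]
    have hprodpos : 0 < B ω * b := by positivity
    have hrw : g ω = ((A ω - a) - c * (B ω - b)) * ((b - B ω) / (B ω * b)) := by
      have h1 : (B ω)⁻¹ - b⁻¹ = (b - B ω) / (B ω * b) := by
        field_simp
      have h2 : A ω - c * B ω = (A ω - a) - c * (B ω - b) := by
        linear_combination -hcb
      rw [hg_def]; dsimp only; rw [h1, h2]
    rw [hrw]
    have habs : |((A ω - a) - c * (B ω - b)) * ((b - B ω) / (B ω * b))|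
        = |(A ω - a) - c * (B ω - b)| * (|B ω - b| / (B ω * b)) := by
      rw [abs_mul, abs_div, abs_of_pos hprodpos, abs_sub_comm b (B ω)]
    rw [habs]
    have h3 : |(A ω - a) - c * (B ω - b)| ≤ |A ω - a| + c * |B ω - b| := by
      refine (abs_sub _ _).trans ?_
      rw [abs_mul, abs_of_nonneg hc0]
    have h4 : |B ω - b| / (B ω * b) ≤ |B ω - b| / l ^ 2 :=
      div_le_div_of_nonneg_left (abs_nonneg _) (by positivity) hprod
    calc |(A ω - a) - c * (B ω - b)| * (|B ω - b| / (B ω * b))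
        ≤ (|A ω - a| + c * |B ω - b|) * (|B ω - b| / l ^ 2) :=
          mul_le_mul h3 h4 (by positivity) (by positivity)
      _ ≤ Bd ω := by
          have hsq : |B ω - b| * |B ω - b| = (B ω - b) ^ 2 := by
            rw [← abs_mul, abs_mul_self]; ring
          have key2 : (|A ω - a| + c * |B ω - b|) * (|B ω - b| / l ^ 2)
              = (1 / l ^ 2) * (|A ω - a| * |B ω - b|) + (c / l ^ 2) * (B ω - b) ^ 2 := by
            rw [← hsq]; ring
          rw [key2, hBd_def]
          have hcl : c / l ^ 2 ≤ L / l ^ 3 := by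
            rw [div_le_div_iff₀ (by positivity) (by positivity)]
            have : c * l ^ 3 ≤ (L / l) * l ^ 3 :=
              mul_le_mul_of_nonneg_right hcL (by positivity)
            calc c * l ^ 3 ≤ (L / l) * l ^ 3 := this
              _ = L * l ^ 2 := by field_simp
          have := mul_le_mul_of_nonneg_right hcl (sq_nonneg (B ω - b))
          dsimp only
          linarith
  -- integrability of the bound pieces
  have habsA : ∀ᵐ ω ∂ℙ, |A ω - a| ≤ L - l := by
    filter_upwards [hA] with ω h
    exact abs_le.mpr ⟨by linarith [h.1], by linarith [h.2]⟩
  have habsB : ∀ᵐ ω ∂ℙ, |B ω - b| ≤ L - l := by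
    filter_upwards [hB] with ω h
    exact abs_le.mpr ⟨by linarith [h.1], by linarith [h.2]⟩
  have intM : Integrable (fun ω => |A ω - a| * |B ω - b|) := by
    refine int_of_bdd ((hAmeas.sub measurable_const).abs.mul
      (hBmeas.sub measurable_const).abs) (C := (L - l) * (L - l)) ?_
    filter_upwards [habsA, habsB] with ω h1 h2
    rw [abs_of_nonneg (by positivity)]
    exact mul_le_mul h1 h2 (abs_nonneg _) (by linarith)
  have intSqB : Integrable (fun ω => (B ω - b) ^ 2) := by
    refine int_of_bdd ((hBmeas.sub measurable_const).pow_const 2)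
      (C := (L - l) ^ 2) ?_
    filter_upwards [habsB] with ω h
    rw [abs_of_nonneg (sq_nonneg _), ← sq_abs]
    exact pow_le_pow_left₀ (abs_nonneg _) h 2
  have intSqA : Integrable (fun ω => (A ω - a) ^ 2) := by
    refine int_of_bdd ((hAmeas.sub measurable_const).pow_const 2)
      (C := (L - l) ^ 2) ?_
    filter_upwards [habsA] with ω h
    rw [abs_of_nonneg (sq_nonneg _), ← sq_abs]
    exact pow_le_pow_left₀ (abs_nonneg _) h 2
  have intBd : Integrable Bd := (intM.const_mul _).add (intSqB.const_mul _)
  -- bound the integral of g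
  have step1 : |∫ ω, g ω| ≤ ∫ ω, Bd ω := by
    refine le_trans ?_ (integral_mono_ae intg.abs intBd hgle)
    simpa [Real.norm_eq_abs] using norm_integral_le_integral_norm (μ := ℙ) g
  have hint : ∫ ω, Bd ω
      = (1 / l ^ 2) * (∫ ω, |A ω - a| * |B ω - b|)
        + (L / l ^ 3) * (∫ ω, (B ω - b) ^ 2) := by
    rw [hBd_def, integral_add (intM.const_mul _) (intSqB.const_mul _),
      integral_const_mul, integral_const_mul]
  -- identify variances
  have intBB : Integrable (fun ω => B ω * B ω) := by
    refine int_of_bdd (hBmeas.mul hBmeas) (C := L * L) ?_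
    filter_upwards [hB] with ω h
    rw [abs_mul]
    have : |B ω| ≤ L := abs_le.mpr ⟨by linarith [h.1], h.2⟩
    exact mul_le_mul this this (abs_nonneg _) hL0.le
  have intAA : Integrable (fun ω => A ω * A ω) := by
    refine int_of_bdd (hAmeas.mul hAmeas) (C := L * L) ?_
    filter_upwards [hA] with ω h
    rw [abs_mul]
    have : |A ω| ≤ L := abs_le.mpr ⟨by linarith [h.1], h.2⟩
    exact mul_le_mul this this (abs_nonneg _) hL0.le
  have hvarB : ∫ ω, (B ω - b) ^ 2 = var B := by
    calc ∫ ω, (B ω - b) ^ 2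
        = ∫ ω, (B ω * B ω - (2 * b) * B ω + b ^ 2) :=
          integral_congr_ae (.of_forall fun ω => by ring)
      _ = (∫ ω, B ω * B ω) - (2 * b) * b + b ^ 2 := by
          have e1 : ∫ ω, (B ω * B ω - (2 * b) * B ω + b ^ 2)
              = (∫ ω, (B ω * B ω - (2 * b) * B ω)) + ∫ (_ : Ω), (b ^ 2 : ℝ) :=
            integral_add (intBB.sub (intB.const_mul _)) (integrable_const _)
          have e2 : ∫ ω, (B ω * B ω - (2 * b) * B ω)
              = (∫ ω, B ω * B ω) - ∫ ω, (2 * b) * B ω :=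
            integral_sub intBB (intB.const_mul _)
          rw [e1, e2, integral_const_mul]
          simp [← hb_def]
      _ = var B := by simp [var, covar, ← hb_def]; ring
  have hvarA : ∫ ω, (A ω - a) ^ 2 = var A := by
    calc ∫ ω, (A ω - a) ^ 2
        = ∫ ω, (A ω * A ω - (2 * a) * A ω + a ^ 2) :=
          integral_congr_ae (.of_forall fun ω => by ring)
      _ = (∫ ω, A ω * A ω) - (2 * a) * a + a ^ 2 := by
          have e1 : ∫ ω, (A ω * A ω - (2 * a) * A ω + a ^ 2)
              = (∫ ω, (A ω * A ω - (2 * a) * A ω)) + ∫ (_ : Ω), (a ^ 2 : ℝ) :=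
            integral_add (intAA.sub (intA.const_mul _)) (integrable_const _)
          have e2 : ∫ ω, (A ω * A ω - (2 * a) * A ω)
              = (∫ ω, A ω * A ω) - ∫ ω, (2 * a) * A ω :=
            integral_sub intAA (intA.const_mul _)
          rw [e1, e2, integral_const_mul]
          simp [← ha_def]
      _ = var A := by simp [var, covar, ← ha_def]; ring
  have hvarA0 : 0 ≤ var A := hvarA ▸ integral_nonneg fun ω => sq_nonneg _
  have hvarB0 : 0 ≤ var B := hvarB ▸ integral_nonneg fun ω => sq_nonneg _
  -- Cauchy–Schwarz
  have hCS : ∫ ω, |A ω - a| * |B ω - b| ≤ Real.sqrt (var A * var B) := by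
    have hpq : Real.HolderConjugate 2 2 := Real.HolderConjugate.two_two
    have hfm : MemLp (fun ω => |A ω - a|) (ENNReal.ofReal 2) (ℙ : Measure Ω) := by
      refine MemLp.of_bound (hAmeas.sub measurable_const).abs.aestronglyMeasurable (L - l) ?_
      filter_upwards [habsA] with ω h
      simpa [Real.norm_eq_abs, abs_abs] using h
    have hgm : MemLp (fun ω => |B ω - b|) (ENNReal.ofReal 2) (ℙ : Measure Ω) := by
      refine MemLp.of_bound (hBmeas.sub measurable_const).abs.aestronglyMeasurable (L - l) ?_
      filter_upwards [habsB] with ω h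
      simpa [Real.norm_eq_abs, abs_abs] using h
    have h := integral_mul_le_Lp_mul_Lq_of_nonneg hpq
      (f := fun ω => |A ω - a|) (g := fun ω => |B ω - b|)
      (Filter.Eventually.of_forall fun ω => abs_nonneg _)
      (Filter.Eventually.of_forall fun ω => abs_nonneg _) hfm hgm
    have e1 : ∫ ω, |A ω - a| ^ (2:ℝ) = var A := by
      rw [← hvarA]
      refine integral_congr_ae (.of_forall fun ω => ?_)
      simp only [Real.rpow_two, sq_abs]
    have e2 : ∫ ω, |B ω - b| ^ (2:ℝ) = var B := by
      rw [← hvarB]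
      refine integral_congr_ae (.of_forall fun ω => ?_)
      simp only [Real.rpow_two, sq_abs]
    rw [e1, e2] at h
    calc ∫ ω, |A ω - a| * |B ω - b|
        ≤ var A ^ ((1:ℝ)/2) * var B ^ ((1:ℝ)/2) := h
      _ = Real.sqrt (var A) * Real.sqrt (var B) := by
          rw [Real.sqrt_eq_rpow, Real.sqrt_eq_rpow]
      _ = Real.sqrt (var A * var B) := (Real.sqrt_mul hvarA0 _).symm
  -- put everything together
  rw [key]
  calc |∫ ω, g ω| ≤ ∫ ω, Bd ω := step1
    _ = (1 / l ^ 2) * (∫ ω, |A ω - a| * |B ω - b|)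
        + (L / l ^ 3) * (∫ ω, (B ω - b) ^ 2) := hint
    _ ≤ (1 / l ^ 2) * Real.sqrt (var A * var B) + (L / l ^ 3) * var B := by
        rw [hvarB]
        have := mul_le_mul_of_nonneg_left hCS (by positivity : (0:ℝ) ≤ 1 / l ^ 2)
        linarith
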